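/- Suppose W satisfies (W₁) and (W₃). Then W(t,u) = o(|u|²) as u → 0 uniformly in t ∈ ℝ; that is, for every ε > 0 there exists δ > 0 such that |W(t,u)| ≤ ε|u|² for all t ∈ ℝ and all u ∈ ℝⁿ with 0 < |u| ≤ δ. -/

import Mathlib

open MeasureTheory Filter Topology
open scoped ENNReal
open scoped RealInnerProductSpace

noncomputable section

/-- `ℝⁿ` with its Euclidean structure. -/
abbrev Rn (n : ℕ) := EuclideanSpace ℝ (Fin n)

/-- Fourier transform with the convention `û(w) = ∫ e^{-i x w} u(x) dx`, componentwise. -/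
def FT {n : ℕ} (u : ℝ → Rn n) (w : ℝ) (j : Fin n) : ℂ :=
  ∫ x : ℝ, Complex.exp (-(Complex.I * x * w)) * (u x j)

/-- Left Liouville–Weyl fractional derivative
`_{-∞}D_t^α u(t) = (α/Γ(1-α)) ∫₀^∞ (u(t) - u(t-ξ))/ξ^{α+1} dξ`. -/
def leftD {n : ℕ} (α : ℝ) (u : ℝ → Rn n) (t : ℝ) : Rn n :=
  (α / Real.Gamma (1 - α)) • ∫ ξ in Set.Ioi (0 : ℝ), (ξ ^ (α + 1))⁻¹ • (u t - u (t - ξ))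

/-- Right Liouville–Weyl fractional derivative. -/
def rightD {n : ℕ} (α : ℝ) (u : ℝ → Rn n) (t : ℝ) : Rn n :=
  (α / Real.Gamma (1 - α)) • ∫ ξ in Set.Ioi (0 : ℝ), (ξ ^ (α + 1))⁻¹ • (u t - u (t + ξ))

/-- Left Liouville–Weyl fractional integral. -/
def leftI {n : ℕ} (α : ℝ) (u : ℝ → Rn n) (x : ℝ) : Rn n :=
  (Real.Gamma α)⁻¹ • ∫ ξ in Set.Iio x, ((x - ξ) ^ (α - 1)) • u ξ

/-- Right Liouville–Weyl fractional integral. -/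
def rightI {n : ℕ} (α : ℝ) (u : ℝ → Rn n) (x : ℝ) : Rn n :=
  (Real.Gamma α)⁻¹ • ∫ ξ in Set.Ioi x, ((ξ - x) ^ (α - 1)) • u ξ

/-- Membership in `H^α(ℝ,ℝⁿ)`: `u ∈ L²` and `|w|^α û ∈ L²`. -/
def MemH {n : ℕ} (α : ℝ) (u : ℝ → Rn n) : Prop :=
  MemLp u 2 volume ∧ Integrable (fun w : ℝ => |w| ^ (2 * α) * ∑ j, ‖FT u w j‖ ^ 2)

/-- The squared `H^α` norm `‖u‖_α² = ‖u‖_{L²}² + ‖|w|^α û‖_{L²}²`. -/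
def HnormSq {n : ℕ} (α : ℝ) (u : ℝ → Rn n) : ℝ :=
  (∫ x : ℝ, ‖u x‖ ^ 2) + ∫ w : ℝ, |w| ^ (2 * α) * ∑ j, ‖FT u w j‖ ^ 2

def Hnorm {n : ℕ} (α : ℝ) (u : ℝ → Rn n) : ℝ := Real.sqrt (HnormSq α u)

/-- The `L²` norm. -/
def L2norm {n : ℕ} (u : ℝ → Rn n) : ℝ := Real.sqrt (∫ t : ℝ, ‖u t‖ ^ 2)

/-- `(A x, y)` for a matrix `A`: the bilinear pairing `∑ i ∑ j A i j • x j • y i`. -/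
def QL {n : ℕ} (A : Matrix (Fin n) (Fin n) ℝ) (x y : Rn n) : ℝ :=
  ∑ i, ∑ j, A i j * x j * y i

/-- Hypothesis (L): `L` is continuous, symmetric positive definite, and coercive:
`(L(t)x,x) ≥ l(t)|x|²` with `l` continuous, positive, `l(t) → ∞` as `|t| → ∞`. -/
def CondL {n : ℕ} (L : ℝ → Matrix (Fin n) (Fin n) ℝ) : Prop :=
  Continuous L ∧ (∀ t, (L t).IsSymm) ∧ (∀ t, (L t).PosDef) ∧
    ∃ l : ℝ → ℝ, Continuous l ∧ (∀ t, 0 < l t) ∧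
      Tendsto l (cocompact ℝ) atTop ∧
      ∀ (t : ℝ) (x : Rn n), l t * ‖x‖ ^ 2 ≤ QL (L t) x x

/-- `W ∈ C¹(ℝ×ℝⁿ, ℝ)` with gradient (in the second variable) `gW`. -/
def CondW0 {n : ℕ} (W : ℝ → Rn n → ℝ) (gW : ℝ → Rn n → Rn n) : Prop :=
  Continuous (fun p : ℝ × Rn n => W p.1 p.2) ∧
  Continuous (fun p : ℝ × Rn n => gW p.1 p.2) ∧
  ∀ t x, HasGradientAt (W t) (gW t x) x

/-- Hypothesis (W₁): Ambrosetti–Rabinowitz with exponent `μ > 2`. -/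
def CondW1 {n : ℕ} (μ : ℝ) (W : ℝ → Rn n → ℝ) (gW : ℝ → Rn n → Rn n) : Prop :=
  CondW0 W gW ∧ 2 < μ ∧
    ∀ (t : ℝ) (x : Rn n), x ≠ 0 → 0 < μ * W t x ∧ μ * W t x ≤ ⟪x, gW t x⟫

/-- Hypothesis (W₂): `|∇W(t,x)| = o(|x|)` as `x → 0`, uniformly in `t`. -/
def CondW2 {n : ℕ} (gW : ℝ → Rn n → Rn n) : Prop :=
  ∀ ε > (0 : ℝ), ∃ δ > (0 : ℝ), ∀ (t : ℝ) (x : Rn n), ‖x‖ ≤ δ → ‖gW t x‖ ≤ ε * ‖x‖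

/-- Hypothesis (W₃): domination `|W(t,x)| + |∇W(t,x)| ≤ |W̄(x)|` by a continuous `W̄`. -/
def CondW3 {n : ℕ} (W : ℝ → Rn n → ℝ) (gW : ℝ → Rn n → Rn n) (Wb : Rn n → ℝ) : Prop :=
  Continuous Wb ∧ ∀ (t : ℝ) (x : Rn n), |W t x| + ‖gW t x‖ ≤ |Wb x|

/-- `M = max_{|u|=1} W̄(u)`. -/
def Mmax {n : ℕ} (Wb : Rn n → ℝ) : ℝ := sSup (Wb '' Metric.sphere (0 : Rn n) 1)

/-- Membership in `X^α`. -/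
def MemX {n : ℕ} (α : ℝ) (L : ℝ → Matrix (Fin n) (Fin n) ℝ) (u : ℝ → Rn n) : Prop :=
  MemH α u ∧ Integrable (fun t : ℝ => ‖leftD α u t‖ ^ 2 + QL (L t) (u t) (u t))

/-- The squared `X^α` norm. -/
def XnormSq {n : ℕ} (α : ℝ) (L : ℝ → Matrix (Fin n) (Fin n) ℝ) (u : ℝ → Rn n) : ℝ :=
  ∫ t : ℝ, (‖leftD α u t‖ ^ 2 + QL (L t) (u t) (u t))

def Xnorm {n : ℕ} (α : ℝ) (L : ℝ → Matrix (Fin n) (Fin n) ℝ) (u : ℝ → Rn n) : ℝ :=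
  Real.sqrt (XnormSq α L u)

/-- The `X^α` inner product. -/
def Xinner {n : ℕ} (α : ℝ) (L : ℝ → Matrix (Fin n) (Fin n) ℝ) (u v : ℝ → Rn n) : ℝ :=
  ∫ t : ℝ, (⟪leftD α u t, leftD α v t⟫ + QL (L t) (u t) (v t))

/-- The action functional `I(u) = ½‖u‖_{X^α}² − ∫ W(t,u) + ∫ (f,u)`. -/
def If {n : ℕ} (α : ℝ) (L : ℝ → Matrix (Fin n) (Fin n) ℝ) (W : ℝ → Rn n → ℝ)
    (f : ℝ → Rn n) (u : ℝ → Rn n) : ℝ :=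
  (1 / 2) * XnormSq α L u - (∫ t : ℝ, W t (u t)) + ∫ t : ℝ, ⟪f t, u t⟫

/-- The derivative pairing `I'(u)v`. -/
def If' {n : ℕ} (α : ℝ) (L : ℝ → Matrix (Fin n) (Fin n) ℝ) (gW : ℝ → Rn n → Rn n)
    (f : ℝ → Rn n) (u v : ℝ → Rn n) : ℝ :=
  ∫ t : ℝ, (⟪leftD α u t, leftD α v t⟫ + QL (L t) (u t) (v t)
    - ⟪gW t (u t), v t⟫ + ⟪f t, v t⟫)

/-- `I'(u_k) → 0` in the dual norm. -/
def DerivTendstoZero {n : ℕ} (α : ℝ) (L : ℝ → Matrix (Fin n) (Fin n) ℝ)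
    (gW : ℝ → Rn n → Rn n) (f : ℝ → Rn n) (u : ℕ → ℝ → Rn n) : Prop :=
  ∀ ε > (0 : ℝ), ∃ N : ℕ, ∀ k ≥ N, ∀ v : ℝ → Rn n, MemX α L v →
    |If' α L gW f (u k) v| ≤ ε * Xnorm α L v

lemma key_scaling {n : ℕ} (μ : ℝ) (W : ℝ → Rn n → ℝ) (gW : ℝ → Rn n → Rn n)
    (hW1 : CondW1 μ W gW) (t : ℝ) (y : Rn n) (hy : y ≠ 0) {r : ℝ}
    (hr0 : 0 < r) (hr1 : r ≤ 1) : W t (r • y) ≤ r ^ μ * W t y := by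
  obtain ⟨⟨_, _, hgrad⟩, hμ2, hAR⟩ := hW1
  set g : ℝ → ℝ := fun s => W t (s • y) with hg
  have hgd : ∀ s : ℝ, HasDerivAt g ⟪gW t (s • y), y⟫ s := by
    intro s
    have hc : HasDerivAt (fun s : ℝ => s • y) y s := by
      simpa using (hasDerivAt_id s).smul_const y
    have := ((hgrad t (s • y)).hasFDerivAt.comp_hasDerivAt s hc)
    exact (by simpa using this : HasDerivAt (W t ∘ fun s : ℝ => s • y) ⟪gW t (s • y), y⟫ s)
  set h : ℝ → ℝ := fun s => g s * s ^ (-μ) with hh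
  have hhd : ∀ s : ℝ, 0 < s →
      HasDerivAt h (⟪gW t (s • y), y⟫ * s ^ (-μ) + g s * (-μ * s ^ (-μ - 1))) s := by
    intro s hs
    exact (hgd s).mul (Real.hasDerivAt_rpow_const (Or.inl hs.ne'))
  have hmono : MonotoneOn h (Set.Icc r 1) := by
    apply monotoneOn_of_deriv_nonneg (convex_Icc r 1)
    · exact fun s hs => ((hhd s (hr0.trans_le hs.1)).continuousAt).continuousWithinAt
    · intro s hs
      rw [interior_Icc] at hs
      exact ((hhd s (hr0.trans hs.1)).differentiableAt).differentiableWithinAt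
    · intro s hs
      rw [interior_Icc] at hs
      have hs0 : 0 < s := hr0.trans hs.1
      rw [(hhd s hs0).deriv]
      have hne : s • y ≠ 0 := smul_ne_zero hs0.ne' hy
      have hkey : μ * g s ≤ s * ⟪gW t (s • y), y⟫ := by
        have := (hAR t (s • y) hne).2
        calc μ * g s ≤ ⟪s • y, gW t (s • y)⟫ := this
          _ = s * ⟪gW t (s • y), y⟫ := by
              rw [real_inner_smul_left, real_inner_comm]
      have hp : (0:ℝ) < s ^ (-μ - 1) := Real.rpow_pos_of_pos hs0 _
      have hid : s ^ (-μ) = s * s ^ (-μ - 1) := by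
        have h2 : s ^ ((1:ℝ) + (-μ - 1)) = s ^ (1:ℝ) * s ^ (-μ - 1) := Real.rpow_add hs0 _ _
        simpa [Real.rpow_one, show (1:ℝ) + (-μ - 1) = -μ by ring] using h2
      rw [hid]
      nlinarith [hp, hkey]
  have h1 : h r ≤ h 1 := hmono ⟨le_refl r, hr1⟩ ⟨hr1, le_refl 1⟩ hr1
  have hh1 : h 1 = W t y := by simp [hh, hg]
  have hhr : h r = W t (r • y) * r ^ (-μ) := rfl
  have hrp : (0:ℝ) < r ^ μ := Real.rpow_pos_of_pos hr0 μ
  have := mul_le_mul_of_nonneg_right (hhr ▸ hh1 ▸ h1) hrp.le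
  calc W t (r • y) = W t (r • y) * r ^ (-μ) * r ^ μ := by
        rw [mul_assoc, ← Real.rpow_add hr0]; simp
    _ ≤ W t y * r ^ μ := this
    _ = r ^ μ * W t y := mul_comm _ _

/-- under (W₁) and (W₃), `W(t,u) = o(|u|²)` as `u → 0` uniformly in `t`. -/
theorem stmt9_W_little_o (n : ℕ) (μ : ℝ) (W : ℝ → Rn n → ℝ) (gW : ℝ → Rn n → Rn n)
    (hW1 : CondW1 μ W gW) (hW3 : ∃ Wb : Rn n → ℝ, CondW3 W gW Wb) :
    ∀ ε > (0 : ℝ), ∃ δ > (0 : ℝ), ∀ (t : ℝ) (x : Rn n),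
      0 < ‖x‖ → ‖x‖ ≤ δ → |W t x| ≤ ε * ‖x‖ ^ 2 := by
  obtain ⟨Wb, hWbc, hdom⟩ := hW3
  intro ε hε
  have hμ2 := hW1.2.1
  have hAR := hW1.2.2
  set C : ℝ := max (sSup ((fun y => |Wb y|) '' Metric.sphere (0 : Rn n) 1)) 0 with hC
  have hC0 : 0 ≤ C := le_max_right _ _
  have hCb : ∀ y : Rn n, ‖y‖ = 1 → |Wb y| ≤ C := by
    intro y hy
    have hbdd : BddAbove ((fun y => |Wb y|) '' Metric.sphere (0 : Rn n) 1) :=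
      ((isCompact_sphere (0 : Rn n) 1).image (continuous_abs.comp hWbc)).bddAbove
    have hmem : |Wb y| ∈ (fun y => |Wb y|) '' Metric.sphere (0 : Rn n) 1 :=
      ⟨y, by simp [Metric.mem_sphere, dist_eq_norm, hy], rfl⟩
    exact le_trans (le_csSup hbdd hmem) (le_max_left _ _)
  have hμ2' : (0:ℝ) < μ - 2 := by linarith
  have hq : (0:ℝ) < ε / (C + 1) := div_pos hε (by linarith)
  refine ⟨min 1 ((ε / (C + 1)) ^ (μ - 2)⁻¹), lt_min one_pos (Real.rpow_pos_of_pos hq _), ?_⟩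
  intro t x hx0 hxδ
  set r := ‖x‖ with hr
  have hx : x ≠ 0 := by simpa [hr] using norm_pos_iff.mp hx0
  set y : Rn n := r⁻¹ • x with hy
  have hyn : ‖y‖ = 1 := by
    rw [hy, norm_smul, norm_inv, norm_norm, ← hr, inv_mul_cancel₀ hx0.ne']
  have hy0 : y ≠ 0 := by intro h; rw [h] at hyn; simp at hyn
  have hxy : x = r • y := by rw [hy, smul_smul, mul_inv_cancel₀ hx0.ne', one_smul]
  have hr1 : r ≤ 1 := hxδ.trans (min_le_left _ _)
  have hWpos : 0 < W t x := by
    have := (hAR t x hx).1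
    nlinarith
  have hscale : W t x ≤ r ^ μ * W t y := by
    rw [hxy] at *
    exact key_scaling μ W gW hW1 t y hy0 hx0 hr1
  have hWy : W t y ≤ C := by
    have h1 := hdom t y
    have h2 := hCb y hyn
    have := norm_nonneg (gW t y)
    have := le_abs_self (W t y)
    linarith
  have hpow : r ^ (μ - 2) ≤ ε / (C + 1) := by
    have h1 : r ^ (μ - 2) ≤ ((ε / (C + 1)) ^ (μ - 2)⁻¹) ^ (μ - 2) :=
      Real.rpow_le_rpow hx0.le (hxδ.trans (min_le_right _ _)) hμ2'.le
    rwa [← Real.rpow_mul hq.le, inv_mul_cancel₀ hμ2'.ne', Real.rpow_one] at h1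
  have hsplit : r ^ μ = r ^ (μ - 2) * r ^ 2 := by
    have h2 : r ^ ((μ - 2) + 2) = r ^ (μ - 2) * r ^ (2:ℝ) := Real.rpow_add hx0 _ _
    rw [show (μ - 2) + 2 = μ by ring] at h2
    rw [h2, Real.rpow_two]
  have hrμC : r ^ μ * W t y ≤ (ε / (C + 1)) * r ^ 2 * C := by
    rw [hsplit]
    have hr2 : (0:ℝ) ≤ r ^ 2 := sq_nonneg r
    have hrm : (0:ℝ) ≤ r ^ (μ - 2) := (Real.rpow_pos_of_pos hx0 _).le
    have hWyp : 0 < W t y := by have := (hAR t y hy0).1; nlinarith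
    have hmm : r ^ (μ - 2) * W t y ≤ (ε / (C + 1)) * C :=
      mul_le_mul hpow hWy hWyp.le hq.le
    nlinarith [mul_le_mul_of_nonneg_right hmm hr2]
  have hfin : (ε / (C + 1)) * r ^ 2 * C ≤ ε * r ^ 2 := by
    rw [div_mul_eq_mul_div, div_mul_eq_mul_div, div_le_iff₀ (by linarith : (0:ℝ) < C + 1)]
    nlinarith [sq_nonneg r]
  rw [abs_of_pos hWpos]
  linarith


end
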